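/- Let K be a nonempty compact connected subset of the Euclidean plane with x⁻ = inf{x(p) : p ∈ K}, x⁺ = sup{x(p) : p ∈ K}, y⁻ = inf{y(p) : p ∈ K}, y⁺ = sup{y(p) : p ∈ K}. Let s, t be points with x(s) < x⁻, x(t) > x⁺, y⁻ ≤ y(s) ≤ y⁺ and y⁻ ≤ y(t) ≤ y⁺. Then for every continuous path γ : [0,1] → ℝ² from s to t whose image is disjoint from K and whose length (total variation) is L, the shorter of the two staircase paths over the top edge or under the bottom edge of the bounding box satisfies min( (y⁺ − y(s)) + (x(t) − x(s)) + (y⁺ − y(t)) , (y(s) − y⁻) + (x(t) − x(s)) + (y(t) − y⁻) ) ≤ √2 · L. Moreover, each of these two staircase paths avoids the interior of the bounding box [x⁻,x⁺] × [y⁻,y⁺]. -/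

import Mathlib

open Complex Finset Real

section StaircaseAux

lemma quot_re_pos {u w : ℂ} (hw : w ≠ 0) (h : ‖u - w‖ < ‖w‖) :
    0 < (u / w).re := by
  have hw' : (0:ℝ) < ‖w‖ := norm_pos_iff.mpr hw
  have he : u / w = 1 + (u - w) / w := by field_simp; ring
  have h2 : |((u - w)/w).re| ≤ ‖(u-w)/w‖ := Complex.abs_re_le_norm _
  rw [norm_div] at h2
  have h3 : ‖u-w‖ / ‖w‖ < 1 := (div_lt_one hw').mpr h
  rw [he, Complex.add_re, Complex.one_re]
  have := abs_lt.mp (lt_of_le_of_lt h2 h3)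
  linarith [this.1]

lemma polar_mul (r1 r2 a1 a2 : ℝ) :
    ((r1:ℂ) * Complex.exp (a1*Complex.I)) * ((r2:ℂ) * Complex.exp (a2*Complex.I))
      = ((r1*r2 : ℝ):ℂ) * Complex.exp (((a1+a2 : ℝ):ℝ)*Complex.I) := by
  push_cast
  rw [add_mul, Complex.exp_add]
  ring

lemma discrete_pos (N : ℕ) (v : ℕ → ℂ)
    (hnz : ∀ i ≤ N, v i ≠ 0)
    (hquot : ∀ i < N, 0 < (v (i+1) / v i).re)
    (him : ∀ i ≤ N, (v i).im < 0)
    (hre0 : (v 0).re < 0) (hreN : 0 < (v N).re) :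
    0 < ∑ i ∈ Finset.range N, Complex.arg (v (i+1) / v i) := by
  obtain ⟨θ, hθ0, hstepAll, hθsum⟩ : ∃ θ : ℕ → ℝ, θ 0 = Complex.arg (v 0) ∧
      (∀ n, θ (n+1) = θ n + Complex.arg (v (n+1) / v n)) ∧
      (∀ n, θ n = Complex.arg (v 0) + ∑ i ∈ Finset.range n, Complex.arg (v (i+1) / v i)) := by
    refine ⟨fun n => Complex.arg (v 0) + ∑ i ∈ Finset.range n, Complex.arg (v (i+1) / v i),
      by simp, fun n => by simp only [Finset.sum_range_succ]; ring, fun n => rfl⟩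
  have key : ∀ n, n ≤ N →
      v n = (‖v n‖ : ℂ) * Complex.exp (θ n * Complex.I) ∧ θ n ∈ Set.Ioo (-π) 0 := by
    intro n
    induction n with
    | zero =>
      intro _
      rw [hθ0]
      exact ⟨(Complex.norm_mul_exp_arg_mul_I (v 0)).symm,
        ⟨Complex.neg_pi_lt_arg _, Complex.arg_neg_iff.mpr (him 0 (Nat.zero_le _))⟩⟩
    | succ n ih =>
      intro hn
      have hn' : n ≤ N := Nat.le_of_succ_le hn
      have hnN : n < N := hn
      obtain ⟨hv, hθn⟩ := ih hn'
      have hθn1 := hθn.1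
      have hθn2 := hθn.2
      have hvn : v n ≠ 0 := hnz n hn'
      have hvn1 : v (n+1) ≠ 0 := hnz (n+1) hn
      have hq := hquot n hnN
      have ha : |Complex.arg (v (n+1) / v n)| < π/2 :=
        Complex.abs_arg_lt_pi_div_two_iff.mpr (Or.inl hq)
      obtain ⟨ha1, ha2⟩ := abs_lt.mp ha
      have hstep : θ (n+1) = θ n + Complex.arg (v (n+1)/v n) := hstepAll n
      have hpi := Real.pi_pos
      have h1 : v (n+1) = (v (n+1) / v n) * v n := (div_mul_cancel₀ _ hvn).symm
      have hmul : v (n+1) = (‖v (n+1)‖ : ℂ) * Complex.exp (θ (n+1) * Complex.I) := by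
        calc v (n+1) = (v (n+1) / v n) * v n := h1
          _ = ((‖v (n+1) / v n‖ : ℂ)
                * Complex.exp (Complex.arg (v (n+1)/v n) * Complex.I))
              * ((‖v n‖ : ℂ) * Complex.exp (θ n * Complex.I)) := by
              rw [Complex.norm_mul_exp_arg_mul_I, ← hv]
          _ = ((‖v (n+1) / v n‖ * ‖v n‖ : ℝ) : ℂ)
              * Complex.exp (((Complex.arg (v (n+1)/v n) + θ n : ℝ) : ℝ) * Complex.I) :=
              polar_mul _ _ _ _
          _ = (‖v (n+1)‖ : ℂ) * Complex.exp (θ (n+1) * Complex.I) := by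
              rw [← norm_mul, ← h1, hstep, add_comm (θ n)]
      refine ⟨hmul, ?_⟩
      have habs : (0:ℝ) < ‖v (n+1)‖ := norm_pos_iff.mpr hvn1
      have hsin : Real.sin (θ (n+1)) < 0 := by
        have him' := him (n+1) hn
        have himv : (v (n+1)).im = ‖v (n+1)‖ * Real.sin (θ (n+1)) := by
          conv_lhs => rw [hmul]
          simp [Complex.mul_im, Complex.exp_ofReal_mul_I_im, Complex.exp_ofReal_mul_I_re]
        nlinarith
      have hub : θ (n+1) < 0 := by
        by_contra hge
        push_neg at hge
        have hle : θ (n+1) ≤ π := by linarith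
        exact absurd (Real.sin_nonneg_of_nonneg_of_le_pi hge hle) (not_le.mpr hsin)
      have hlb : -π < θ (n+1) := by
        by_contra hle
        push_neg at hle
        have hA : 0 ≤ θ (n+1) + 2*π := by linarith
        have hB : θ (n+1) + 2*π ≤ π := by linarith
        have h3 := Real.sin_nonneg_of_nonneg_of_le_pi hA hB
        rw [Real.sin_add_two_pi] at h3
        linarith
      exact ⟨hlb, hub⟩
  obtain ⟨hv0, hθ0mem⟩ := key 0 (Nat.zero_le N)
  obtain ⟨hvN, hθNmem⟩ := key N le_rfl
  have hpi := Real.pi_pos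
  have habs0 : (0:ℝ) < ‖v 0‖ := norm_pos_iff.mpr (hnz 0 (Nat.zero_le N))
  have habsN : (0:ℝ) < ‖v N‖ := norm_pos_iff.mpr (hnz N le_rfl)
  have hcos0 : Real.cos (θ 0) < 0 := by
    have h : (v 0).re = ‖v 0‖ * Real.cos (θ 0) := by
      conv_lhs => rw [hv0]
      simp [Complex.mul_re, Complex.exp_ofReal_mul_I_re, Complex.exp_ofReal_mul_I_im]
    nlinarith
  have hcosN : 0 < Real.cos (θ N) := by
    have h : (v N).re = ‖v N‖ * Real.cos (θ N) := by
      conv_lhs => rw [hvN]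
      simp [Complex.mul_re, Complex.exp_ofReal_mul_I_re, Complex.exp_ofReal_mul_I_im]
    nlinarith
  have h0lt : θ 0 < -(π/2) := by
    by_contra h
    push_neg at h
    have := Real.cos_nonneg_of_mem_Icc ⟨h, by linarith [hθ0mem.2]⟩
    linarith
  have hNgt : -(π/2) < θ N := by
    by_contra h
    push_neg at h
    have h1 : π/2 ≤ -(θ N) := by linarith
    have h2 : -(θ N) ≤ π + π/2 := by linarith [hθNmem.1]
    have := Real.cos_nonpos_of_pi_div_two_le_of_le h1 h2
    rw [Real.cos_neg] at this
    linarith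
  have hsum : θ N = θ 0 + ∑ i ∈ Finset.range N, Complex.arg (v (i+1) / v i) := by
    rw [hθ0, hθsum N]
  linarith

lemma no_crossing (S : Set ℂ) (hS : IsCompact S) (hSc : IsPreconnected S)
    (zt zb : ℂ) (hzt : zt ∈ S) (hzb : zb ∈ S)
    (g : ℝ → ℂ) (hg : Continuous g)
    (hdisj : ∀ τ ∈ Set.Icc (0:ℝ) 1, g τ ∉ S)
    (himt : ∀ τ ∈ Set.Icc (0:ℝ) 1, (g τ).im < zt.im)
    (himb : ∀ τ ∈ Set.Icc (0:ℝ) 1, zb.im < (g τ).im)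
    (hre0 : ∀ z ∈ S, (g 0).re < z.re)
    (hre1 : ∀ z ∈ S, z.re < (g 1).re) : False := by
  -- positive distance between path and S
  have hprodK : IsCompact (S ×ˢ Set.Icc (0:ℝ) 1) := hS.prod isCompact_Icc
  have hFc : Continuous (fun q : ℂ × ℝ => dist q.1 (g q.2)) :=
    Continuous.dist continuous_fst (hg.comp continuous_snd)
  obtain ⟨q0, hq0, hmin⟩ := hprodK.exists_isMinOn
    ⟨(zt, 0), Set.mk_mem_prod hzt (by norm_num)⟩ hFc.continuousOn
  set δ := dist q0.1 (g q0.2) with hδdef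
  have hq0S : q0.1 ∈ S := (Set.mem_prod.mp hq0).1
  have hq0I : q0.2 ∈ Set.Icc (0:ℝ) 1 := (Set.mem_prod.mp hq0).2
  have hδpos : 0 < δ := by
    rw [hδdef, dist_pos]
    intro h
    exact hdisj q0.2 hq0I (h ▸ hq0S)
  have hδle : ∀ z ∈ S, ∀ τ ∈ Set.Icc (0:ℝ) 1, δ ≤ dist z (g τ) := by
    intro z hz τ hτ
    exact isMinOn_iff.mp hmin (z, τ) (Set.mk_mem_prod hz hτ)
  -- uniform continuity
  have huc : UniformContinuousOn g (Set.Icc 0 1) :=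
    isCompact_Icc.uniformContinuousOn_of_continuous hg.continuousOn
  rw [Metric.uniformContinuousOn_iff] at huc
  obtain ⟨η, hη, hη'⟩ := huc δ hδpos
  obtain ⟨n, hn⟩ := exists_nat_one_div_lt hη
  set N : ℕ := n + 1 with hNdef
  have hN0 : (0:ℝ) < (N:ℝ) := by positivity
  have hmemx : ∀ i ≤ N, ((i:ℝ)/N) ∈ Set.Icc (0:ℝ) 1 := by
    intro i hi
    constructor
    · positivity
    · rw [div_le_one hN0]
      exact_mod_cast hi
  have hx0 : ((0:ℕ):ℝ)/N = 0 := by simp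
  have hxN : ((N:ℕ):ℝ)/N = 1 := div_self (ne_of_gt hN0)
  -- step bound
  have hstepd : ∀ i < N, dist (g (((i+1:ℕ):ℝ)/N)) (g ((i:ℝ)/N)) < δ := by
    intro i hi
    apply hη' _ (hmemx (i+1) hi) _ (hmemx i (le_of_lt hi))
    rw [Real.dist_eq]
    have : ((i+1:ℕ):ℝ)/N - (i:ℝ)/N = 1/N := by
      push_cast
      field_simp
      ring
    rw [this, abs_of_pos (by positivity)]
    calc (1:ℝ)/N = 1/((n:ℝ)+1) := by rw [hNdef]; push_cast; ring
      _ < η := hn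
  -- the vectors
  set V : ℂ → ℕ → ℂ := fun z i => g ((i:ℝ)/N) - z with hVdef
  have hnz : ∀ z ∈ S, ∀ i ≤ N, V z i ≠ 0 := by
    intro z hz i hi
    rw [hVdef, sub_ne_zero]
    intro h
    exact hdisj _ (hmemx i hi) (h ▸ hz)
  have hquot : ∀ z ∈ S, ∀ i < N, 0 < (V z (i+1) / V z i).re := by
    intro z hz i hi
    apply quot_re_pos (hnz z hz i (le_of_lt hi))
    have h1 : V z (i+1) - V z i = g (((i+1:ℕ):ℝ)/N) - g ((i:ℝ)/N) := by
      show (g (((i+1:ℕ):ℝ)/N) - z) - (g ((i:ℝ)/N) - z) = _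
      ring
    rw [h1, ← Complex.dist_eq]
    have h2 : ‖V z i‖ = dist z (g ((i:ℝ)/N)) := by
      show ‖g ((i:ℝ)/N) - z‖ = _
      rw [← Complex.dist_eq, dist_comm]
    rw [h2]
    exact lt_of_lt_of_le (hstepd i hi) (hδle z hz _ (hmemx i (le_of_lt hi)))
  -- winding-ish sum
  set W : ℂ → ℝ := fun z => ∑ i ∈ Finset.range N, Complex.arg (V z (i+1) / V z i) with hWdef
  have hWcont : ContinuousOn W S := by
    apply continuousOn_finset_sum
    intro i hi
    have hiN : i < N := Finset.mem_range.mp hi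
    intro z hz
    apply ContinuousAt.continuousWithinAt
    have hca : ContinuousAt (fun z => V z (i+1) / V z i) z := by
      apply ContinuousAt.div
      · exact (continuous_const.sub continuous_id).continuousAt
      · exact (continuous_const.sub continuous_id).continuousAt
      · exact hnz z hz i (le_of_lt hiN)
    exact ContinuousAt.comp (g := Complex.arg) (f := fun z => V z (i+1) / V z i)
      (Complex.continuousAt_arg (Or.inl (hquot z hz i hiN))) hca
  have hWt : 0 < W zt := by
    apply discrete_pos N (V zt) (hnz zt hzt) (hquot zt hzt)
    · intro i hi
      show (g ((i:ℝ)/N) - zt).im < 0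
      rw [Complex.sub_im]
      have := himt _ (hmemx i hi)
      linarith
    · show (g (((0:ℕ):ℝ)/N) - zt).re < 0
      rw [Complex.sub_re, show ((0:ℕ):ℝ)/N = 0 by simp]
      have h := hre0 zt hzt
      linarith
    · show 0 < (g (((N:ℕ):ℝ)/N) - zt).re
      rw [Complex.sub_re, hxN]
      have h := hre1 zt hzt
      linarith
  have hWb : W zb < 0 := by
    have hpos := discrete_pos N (fun i => (starRingEnd ℂ) (V zb i))
      (fun i hi => by simpa using hnz zb hzb i hi)
      (fun i hi => by
        show 0 < ((starRingEnd ℂ) (V zb (i+1)) / (starRingEnd ℂ) (V zb i)).re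
        rw [← map_div₀, Complex.conj_re]
        exact hquot zb hzb i hi)
      (fun i hi => by
        show ((starRingEnd ℂ) (V zb i)).im < 0
        rw [Complex.conj_im]
        have h := himb _ (hmemx i hi)
        have : (V zb i).im = (g ((i:ℝ)/N)).im - zb.im := by
          show (g ((i:ℝ)/N) - zb).im = _
          rw [Complex.sub_im]
        linarith [this]
        )
      (by
        show ((starRingEnd ℂ) (V zb 0)).re < 0
        rw [Complex.conj_re]
        show (g (((0:ℕ):ℝ)/N) - zb).re < 0
        rw [Complex.sub_re, show ((0:ℕ):ℝ)/N = 0 by simp]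
        have h := hre0 zb hzb
        linarith)
      (by
        show 0 < ((starRingEnd ℂ) (V zb N)).re
        rw [Complex.conj_re]
        show 0 < (g (((N:ℕ):ℝ)/N) - zb).re
        rw [Complex.sub_re, hxN]
        have h := hre1 zb hzb
        linarith)
    have heq : ∑ i ∈ Finset.range N,
        Complex.arg ((starRingEnd ℂ) (V zb (i+1)) / (starRingEnd ℂ) (V zb i)) = - W zb := by
      rw [hWdef, ← Finset.sum_neg_distrib]
      apply Finset.sum_congr rfl
      intro i hi
      have hiN := Finset.mem_range.mp hi
      rw [← map_div₀, Complex.arg_conj, if_neg]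
      have h := Complex.abs_arg_lt_pi_div_two_iff.mpr
        (Or.inl (hquot zb hzb i hiN))
      intro hpi
      rw [hpi] at h
      have := Real.pi_pos
      rw [abs_of_pos Real.pi_pos] at h
      linarith
    rw [heq] at hpos
    linarith
  -- IVT
  have h0mem : (0:ℝ) ∈ Set.Icc (W zb) (W zt) := ⟨le_of_lt hWb, le_of_lt hWt⟩
  obtain ⟨z, hzS, hWz⟩ := hSc.intermediate_value hzb hzt hWcont h0mem
  -- product identity
  have hprod : ∀ m, m ≤ N → ∏ i ∈ Finset.range m, (V z (i+1) / V z i) = V z m / V z 0 := by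
    intro m
    induction m with
    | zero => intro _; simp [div_self (hnz z hzS 0 (Nat.zero_le N))]
    | succ m ih =>
      intro hm
      have hm' : m ≤ N := Nat.le_of_succ_le hm
      rw [Finset.prod_range_succ, ih hm']
      have h0 := hnz z hzS 0 (Nat.zero_le N)
      have hmm := hnz z hzS m hm'
      field_simp
  have hPe : V z N / V z 0
      = ((∏ i ∈ Finset.range N, ‖V z (i+1) / V z i‖ : ℝ) : ℂ)
        * Complex.exp ((W z : ℝ) * Complex.I) := by
    rw [← hprod N le_rfl]
    calc ∏ i ∈ Finset.range N, (V z (i+1) / V z i)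
        = ∏ i ∈ Finset.range N, ((‖V z (i+1) / V z i‖ : ℂ)
            * Complex.exp ((Complex.arg (V z (i+1) / V z i) : ℝ) * Complex.I)) := by
          apply Finset.prod_congr rfl
          intro i _
          rw [Complex.norm_mul_exp_arg_mul_I]
      _ = (∏ i ∈ Finset.range N, (‖V z (i+1) / V z i‖ : ℂ))
          * ∏ i ∈ Finset.range N, Complex.exp ((Complex.arg (V z (i+1) / V z i) : ℝ) * Complex.I) :=
          Finset.prod_mul_distrib
      _ = ((∏ i ∈ Finset.range N, ‖V z (i+1) / V z i‖ : ℝ) : ℂ)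
          * Complex.exp ((W z : ℝ) * Complex.I) := by
          rw [← Complex.exp_sum]
          congr 1
          · push_cast
            rfl
          · congr 1
            rw [hWdef]
            push_cast
            rw [Finset.sum_mul]
  rw [hWz] at hPe
  simp only [Complex.ofReal_zero, zero_mul, Complex.exp_zero, mul_one] at hPe
  have hC : (0:ℝ) < ∏ i ∈ Finset.range N, ‖V z (i+1) / V z i‖ := by
    apply Finset.prod_pos
    intro i hi
    have hiN := Finset.mem_range.mp hi
    exact norm_pos_iff.mpr (div_ne_zero (hnz z hzS (i+1) hiN) (hnz z hzS i (le_of_lt hiN)))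
  have hVN : V z N = ((∏ i ∈ Finset.range N, ‖V z (i+1) / V z i‖ : ℝ) : ℂ) * V z 0 := by
    rw [← hPe, div_mul_cancel₀]
    exact hnz z hzS 0 (Nat.zero_le N)
  have hre : (V z N).re = (∏ i ∈ Finset.range N, ‖V z (i+1) / V z i‖) * (V z 0).re := by
    rw [hVN, Complex.re_ofReal_mul]
  have hre0' : (V z 0).re < 0 := by
    show (g (((0:ℕ):ℝ)/N) - z).re < 0
    rw [Complex.sub_re, show ((0:ℕ):ℝ)/N = 0 by simp]
    have h := hre0 z hzS
    linarith
  have hreN' : 0 < (V z N).re := by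
    show 0 < (g (((N:ℕ):ℝ)/N) - z).re
    rw [Complex.sub_re, hxN]
    have h := hre1 z hzS
    linarith
  nlinarith

end StaircaseAux

/-- A point of the Euclidean plane with the given coordinates. -/
noncomputable def planePt (a b : ℝ) : EuclideanSpace ℝ (Fin 2) := WithLp.toLp 2 ![a, b]

/-- The closed axis-parallel rectangle `[xlo, xhi] × [ylo, yhi]` in the Euclidean plane. -/
def closedBox (xlo xhi ylo yhi : ℝ) : Set (EuclideanSpace ℝ (Fin 2)) :=
  {p | xlo ≤ p 0 ∧ p 0 ≤ xhi ∧ ylo ≤ p 1 ∧ p 1 ≤ yhi}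

/-- Routing around a single bounding box is `√2`-competitive: if a continuous path of
length (total variation) `L` from `s` to `t` avoids a nonempty compact connected set `K`,
where `s` lies strictly left and `t` strictly right of `K`'s bounding box and both lie
within its vertical range, then the shorter of the two staircase paths over the top edge
or under the bottom edge of the box has length at most `√2 * L`; moreover both staircase
paths avoid the interior of the bounding box. -/
theorem staircase_around_bbox_sqrt_two_competitive
    (K : Set (EuclideanSpace ℝ (Fin 2)))
    (hne : K.Nonempty) (hcpt : IsCompact K) (hconn : IsConnected K)
    (xlo xhi ylo yhi : ℝ)
    (hxlo : xlo = sInf ((fun p : EuclideanSpace ℝ (Fin 2) => p 0) '' K))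
    (hxhi : xhi = sSup ((fun p : EuclideanSpace ℝ (Fin 2) => p 0) '' K))
    (hylo : ylo = sInf ((fun p : EuclideanSpace ℝ (Fin 2) => p 1) '' K))
    (hyhi : yhi = sSup ((fun p : EuclideanSpace ℝ (Fin 2) => p 1) '' K))
    (s t : EuclideanSpace ℝ (Fin 2))
    (hs0 : s 0 < xlo) (ht0 : xhi < t 0)
    (hs1lo : ylo ≤ s 1) (hs1hi : s 1 ≤ yhi) (ht1lo : ylo ≤ t 1) (ht1hi : t 1 ≤ yhi)
    (γ : ℝ → EuclideanSpace ℝ (Fin 2))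
    (hγ : ContinuousOn γ (Set.Icc 0 1)) (hγ0 : γ 0 = s) (hγ1 : γ 1 = t)
    (hdisj : ∀ τ ∈ Set.Icc (0 : ℝ) 1, γ τ ∉ K)
    (L : ℝ) (hL : eVariationOn γ (Set.Icc 0 1) = ENNReal.ofReal L) :
    min ((yhi - s 1) + (t 0 - s 0) + (yhi - t 1))
        ((s 1 - ylo) + (t 0 - s 0) + (t 1 - ylo)) ≤ Real.sqrt 2 * L ∧
    (∀ q ∈ segment ℝ s (planePt (s 0) yhi) ∪
            segment ℝ (planePt (s 0) yhi) (planePt (t 0) yhi) ∪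
            segment ℝ (planePt (t 0) yhi) t,
        q ∉ interior (closedBox xlo xhi ylo yhi)) ∧
    (∀ q ∈ segment ℝ s (planePt (s 0) ylo) ∪
            segment ℝ (planePt (s 0) ylo) (planePt (t 0) ylo) ∪
            segment ℝ (planePt (t 0) ylo) t,
        q ∉ interior (closedBox xlo xhi ylo yhi)) := by
  classical
  have hc0 : Continuous (fun p : EuclideanSpace ℝ (Fin 2) => p 0) := by fun_prop
  have hc1 : Continuous (fun p : EuclideanSpace ℝ (Fin 2) => p 1) := by fun_prop
  have hKx : IsCompact ((fun p : EuclideanSpace ℝ (Fin 2) => p 0) '' K) := hcpt.image hc0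
  have hKy : IsCompact ((fun p : EuclideanSpace ℝ (Fin 2) => p 1) '' K) := hcpt.image hc1
  have hKxne : ((fun p : EuclideanSpace ℝ (Fin 2) => p 0) '' K).Nonempty := hne.image _
  have hKyne : ((fun p : EuclideanSpace ℝ (Fin 2) => p 1) '' K).Nonempty := hne.image _
  have hxloK : ∀ p ∈ K, xlo ≤ p 0 := fun p hp => hxlo ▸ csInf_le hKx.bddBelow ⟨p, hp, rfl⟩
  have hxhiK : ∀ p ∈ K, p 0 ≤ xhi := fun p hp => hxhi ▸ le_csSup hKx.bddAbove ⟨p, hp, rfl⟩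
  have hyloK : ∀ p ∈ K, ylo ≤ p 1 := fun p hp => hylo ▸ csInf_le hKy.bddBelow ⟨p, hp, rfl⟩
  have hyhiK : ∀ p ∈ K, p 1 ≤ yhi := fun p hp => hyhi ▸ le_csSup hKy.bddAbove ⟨p, hp, rfl⟩
  obtain ⟨p₀, hp₀⟩ := hne
  have hxlohi : xlo ≤ xhi := le_trans (hxloK p₀ hp₀) (hxhiK p₀ hp₀)
  obtain ⟨pt, hptK, hpt1⟩ : ∃ p ∈ K, p 1 = yhi := by
    have := hyhi ▸ hKy.sSup_mem hKyne
    obtain ⟨p, hp, hp'⟩ := this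
    exact ⟨p, hp, hp'⟩
  obtain ⟨pb, hpbK, hpb1⟩ : ∃ p ∈ K, p 1 = ylo := by
    have := hylo ▸ hKy.sInf_mem hKyne
    obtain ⟨p, hp, hp'⟩ := this
    exact ⟨p, hp, hp'⟩
  -- interior characterization
  have hint : ∀ q : EuclideanSpace ℝ (Fin 2), q ∈ interior (closedBox xlo xhi ylo yhi) →
      xlo < q 0 ∧ q 0 < xhi ∧ ylo < q 1 ∧ q 1 < yhi := by
    intro q hq
    rw [mem_interior_iff_mem_nhds, Metric.mem_nhds_iff] at hq
    obtain ⟨ε, hε, hball⟩ := hq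
    have key : ∀ (i : Fin 2) (σ : ℝ), |σ| < ε →
        (q + EuclideanSpace.single i σ) ∈ closedBox xlo xhi ylo yhi := by
      intro i σ hσ
      apply hball
      rw [Metric.mem_ball, dist_eq_norm, add_sub_cancel_left, EuclideanSpace.norm_single]
      exact hσ
    have hev : ∀ (i : Fin 2) (σ : ℝ), (q + EuclideanSpace.single i σ) i = q i + σ := by
      intro i σ
      rw [PiLp.add_apply, EuclideanSpace.single_apply, if_pos rfl]
    have habs : |ε/2| < ε := by rw [abs_of_pos (by linarith)]; linarith
    have habs' : |-(ε/2)| < ε := by rw [abs_neg, abs_of_pos (by linarith)]; linarith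
    have h1 := key 0 (ε/2) habs
    have h2 := key 0 (-(ε/2)) habs'
    have h3 := key 1 (ε/2) habs
    have h4 := key 1 (-(ε/2)) habs'
    simp only [closedBox, Set.mem_setOf_eq] at h1 h2 h3 h4
    rw [hev 0 (ε/2)] at h1
    rw [hev 0 (-(ε/2))] at h2
    rw [hev 1 (ε/2)] at h3
    rw [hev 1 (-(ε/2))] at h4
    refine ⟨by linarith [h2.1], by linarith [h1.2.1], by linarith [h4.2.2.1], by linarith [h3.2.2.2]⟩
  have hpp0 : ∀ a b : ℝ, planePt a b 0 = a := fun a b => rfl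
  have hpp1 : ∀ a b : ℝ, planePt a b 1 = b := fun a b => rfl
  have hseg : ∀ (a b q : EuclideanSpace ℝ (Fin 2)), q ∈ segment ℝ a b → ∀ i : Fin 2,
      ∃ u v : ℝ, 0 ≤ u ∧ 0 ≤ v ∧ u + v = 1 ∧ q i = u * a i + v * b i := by
    intro a b q hq i
    obtain ⟨u, v, hu, hv, huv, rfl⟩ := hq
    refine ⟨u, v, hu, hv, huv, ?_⟩
    rw [PiLp.add_apply, PiLp.smul_apply, PiLp.smul_apply, smul_eq_mul, smul_eq_mul]
  have htop : ∀ q ∈ segment ℝ s (planePt (s 0) yhi) ∪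
      segment ℝ (planePt (s 0) yhi) (planePt (t 0) yhi) ∪
      segment ℝ (planePt (t 0) yhi) t,
      q ∉ interior (closedBox xlo xhi ylo yhi) := by
    rintro q ((hq | hq) | hq) hqi
    · obtain ⟨u, v, hu, hv, huv, h0⟩ := hseg _ _ _ hq 0
      rw [hpp0] at h0
      have hq0 : q 0 = s 0 := by rw [h0, ← add_mul, huv, one_mul]
      have := (hint q hqi).1
      rw [hq0] at this
      linarith
    · obtain ⟨u, v, hu, hv, huv, h1⟩ := hseg _ _ _ hq 1
      rw [hpp1, hpp1] at h1
      have hq1 : q 1 = yhi := by rw [h1, ← add_mul, huv, one_mul]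
      have := (hint q hqi).2.2.2
      rw [hq1] at this
      linarith
    · obtain ⟨u, v, hu, hv, huv, h0⟩ := hseg _ _ _ hq 0
      rw [hpp0] at h0
      have hq0 : q 0 = t 0 := by rw [h0, ← add_mul, huv, one_mul]
      have := (hint q hqi).2.1
      rw [hq0] at this
      linarith
  have hbot : ∀ q ∈ segment ℝ s (planePt (s 0) ylo) ∪
      segment ℝ (planePt (s 0) ylo) (planePt (t 0) ylo) ∪
      segment ℝ (planePt (t 0) ylo) t,
      q ∉ interior (closedBox xlo xhi ylo yhi) := by
    rintro q ((hq | hq) | hq) hqi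
    · obtain ⟨u, v, hu, hv, huv, h0⟩ := hseg _ _ _ hq 0
      rw [hpp0] at h0
      have hq0 : q 0 = s 0 := by rw [h0, ← add_mul, huv, one_mul]
      have := (hint q hqi).1
      rw [hq0] at this
      linarith
    · obtain ⟨u, v, hu, hv, huv, h1⟩ := hseg _ _ _ hq 1
      rw [hpp1, hpp1] at h1
      have hq1 : q 1 = ylo := by rw [h1, ← add_mul, huv, one_mul]
      have := (hint q hqi).2.2.1
      rw [hq1] at this
      linarith
    · obtain ⟨u, v, hu, hv, huv, h0⟩ := hseg _ _ _ hq 0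
      rw [hpp0] at h0
      have hq0 : q 0 = t 0 := by rw [h0, ← add_mul, huv, one_mul]
      have := (hint q hqi).2.1
      rw [hq0] at this
      linarith
  refine ⟨?_, htop, hbot⟩
  -- arithmetic helpers
  have habs2 : ∀ a b : ℝ, |a| + |b| ≤ Real.sqrt 2 * Real.sqrt (a^2 + b^2) := by
    intro a b
    have h1 : (|a| + |b|)^2 ≤ 2*(a^2+b^2) := by
      nlinarith [sq_nonneg (|a| - |b|), _root_.sq_abs a, _root_.sq_abs b]
    calc |a|+|b| = Real.sqrt ((|a|+|b|)^2) := (Real.sqrt_sq (by positivity)).symm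
      _ ≤ Real.sqrt (2*(a^2+b^2)) := Real.sqrt_le_sqrt h1
      _ = Real.sqrt 2 * Real.sqrt (a^2+b^2) := Real.sqrt_mul (by norm_num) _
  have hkey : ∀ u w : EuclideanSpace ℝ (Fin 2),
      |u 0 - w 0| + |u 1 - w 1| ≤ Real.sqrt 2 * dist u w := by
    intro u w
    have hd : dist u w = Real.sqrt ((u 0 - w 0)^2 + (u 1 - w 1)^2) := by
      rw [EuclideanSpace.dist_eq]
      congr 1
      rw [Fin.sum_univ_two, Real.dist_eq, Real.dist_eq, _root_.sq_abs, _root_.sq_abs]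
    rw [hd]
    exact habs2 _ _
  by_cases hex : ∃ τ ∈ Set.Icc (0:ℝ) 1, γ τ 1 ≤ ylo ∨ yhi ≤ γ τ 1
  · obtain ⟨τ, hτ, hcase⟩ := hex
    have hvar := eVariationOn.Icc_add_Icc γ (s := Set.Icc (0:ℝ) 1) hτ.1 hτ.2 hτ
    rw [Set.inter_eq_self_of_subset_right (Set.Icc_subset_Icc le_rfl hτ.2),
      Set.inter_eq_self_of_subset_right (Set.Icc_subset_Icc hτ.1 le_rfl),
      Set.inter_self] at hvar
    have he1 : edist (γ 0) (γ τ) ≤ eVariationOn γ (Set.Icc 0 τ) :=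
      eVariationOn.edist_le γ (Set.mem_Icc.mpr ⟨le_rfl, hτ.1⟩) (Set.mem_Icc.mpr ⟨hτ.1, le_rfl⟩)
    have he2 : edist (γ τ) (γ 1) ≤ eVariationOn γ (Set.Icc τ 1) :=
      eVariationOn.edist_le γ (Set.mem_Icc.mpr ⟨le_rfl, hτ.2⟩) (Set.mem_Icc.mpr ⟨hτ.2, le_rfl⟩)
    have hsum : edist (γ 0) (γ τ) + edist (γ τ) (γ 1) ≤ ENNReal.ofReal L := by
      rw [← hL, ← hvar]
      exact add_le_add he1 he2
    rw [hγ0, hγ1, edist_dist, edist_dist,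
      ← ENNReal.ofReal_add dist_nonneg dist_nonneg] at hsum
    have hst : (0:ℝ) < dist s t := by
      rw [dist_pos]
      intro h
      have h' : s 0 = t 0 := by rw [h]
      linarith
    have hd12pos : 0 < dist s (γ τ) + dist (γ τ) t :=
      lt_of_lt_of_le hst (dist_triangle s (γ τ) t)
    have hLpos : 0 < L := by
      by_contra hL0
      push_neg at hL0
      rw [ENNReal.ofReal_eq_zero.mpr hL0, nonpos_iff_eq_zero] at hsum
      have := ENNReal.ofReal_eq_zero.mp hsum
      linarith
    have hd12L : dist s (γ τ) + dist (γ τ) t ≤ L :=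
      (ENNReal.ofReal_le_ofReal_iff hLpos.le).mp hsum
    have hk1 : |γ τ 0 - s 0| + |γ τ 1 - s 1| ≤ Real.sqrt 2 * dist s (γ τ) := by
      rw [dist_comm]
      exact hkey (γ τ) s
    have hk2 : |t 0 - γ τ 0| + |t 1 - γ τ 1| ≤ Real.sqrt 2 * dist (γ τ) t := by
      rw [dist_comm]
      exact hkey t (γ τ)
    have hmulL : Real.sqrt 2 * (dist s (γ τ) + dist (γ τ) t) ≤ Real.sqrt 2 * L :=
      mul_le_mul_of_nonneg_left hd12L (Real.sqrt_nonneg 2)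
    have hmul_add := mul_add (Real.sqrt 2) (dist s (γ τ)) (dist (γ τ) t)
    rcases hcase with hbotc | htopc
    · calc min ((yhi - s 1) + (t 0 - s 0) + (yhi - t 1))
            ((s 1 - ylo) + (t 0 - s 0) + (t 1 - ylo))
          ≤ (s 1 - ylo) + (t 0 - s 0) + (t 1 - ylo) := min_le_right _ _
        _ ≤ Real.sqrt 2 * (dist s (γ τ) + dist (γ τ) t) := by
            have b1 : γ τ 0 - s 0 ≤ |γ τ 0 - s 0| := le_abs_self _
            have b2 : t 0 - γ τ 0 ≤ |t 0 - γ τ 0| := le_abs_self _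
            have b3 : s 1 - ylo ≤ |γ τ 1 - s 1| := by
              rw [abs_sub_comm]
              calc s 1 - ylo ≤ s 1 - γ τ 1 := by linarith
                _ ≤ |s 1 - γ τ 1| := le_abs_self _
            have b4 : t 1 - ylo ≤ |t 1 - γ τ 1| := by
              calc t 1 - ylo ≤ t 1 - γ τ 1 := by linarith
                _ ≤ |t 1 - γ τ 1| := le_abs_self _
            linarith
        _ ≤ Real.sqrt 2 * L := hmulL
    · calc min ((yhi - s 1) + (t 0 - s 0) + (yhi - t 1))
            ((s 1 - ylo) + (t 0 - s 0) + (t 1 - ylo))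
          ≤ (yhi - s 1) + (t 0 - s 0) + (yhi - t 1) := min_le_left _ _
        _ ≤ Real.sqrt 2 * (dist s (γ τ) + dist (γ τ) t) := by
            have b1 : γ τ 0 - s 0 ≤ |γ τ 0 - s 0| := le_abs_self _
            have b2 : t 0 - γ τ 0 ≤ |t 0 - γ τ 0| := le_abs_self _
            have b3 : yhi - s 1 ≤ |γ τ 1 - s 1| := by
              calc yhi - s 1 ≤ γ τ 1 - s 1 := by linarith
                _ ≤ |γ τ 1 - s 1| := le_abs_self _
            have b4 : yhi - t 1 ≤ |t 1 - γ τ 1| := by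
              rw [abs_sub_comm]
              calc yhi - t 1 ≤ γ τ 1 - t 1 := by linarith
                _ ≤ |γ τ 1 - t 1| := le_abs_self _
            linarith
        _ ≤ Real.sqrt 2 * L := hmulL
  · exfalso
    push_neg at hex
    set e : EuclideanSpace ℝ (Fin 2) → ℂ := fun p => (p 0 : ℂ) + (p 1 : ℝ) * Complex.I
      with hedef
    have hecont : Continuous e := by
      apply Continuous.add
      · exact Complex.continuous_ofReal.comp hc0
      · exact (Complex.continuous_ofReal.comp hc1).mul continuous_const
    have here : ∀ p, (e p).re = p 0 := by
      intro p
      simp [hedef]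
    have heim : ∀ p, (e p).im = p 1 := by
      intro p
      simp [hedef]
    have heinj : Function.Injective e := by
      intro p q h
      have h1 : p 0 = q 0 := by rw [← here p, ← here q, h]
      have h2 : p 1 = q 1 := by rw [← heim p, ← heim q, h]
      ext i
      fin_cases i
      · exact h1
      · exact h2
    set pr : ℝ → ℝ := fun τ => max 0 (min 1 τ) with hprdef
    have hprmem : ∀ τ, pr τ ∈ Set.Icc (0:ℝ) 1 :=
      fun τ => ⟨le_max_left _ _, max_le (by norm_num) (min_le_left _ _)⟩
    have hprcont : Continuous pr := continuous_const.max (continuous_const.min continuous_id)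
    have hpr0 : pr 0 = 0 := by simp [hprdef]
    have hpr1 : pr 1 = 1 := by simp [hprdef]
    set g : ℝ → ℂ := fun τ => e (γ (pr τ)) with hgdef
    have hgcont : Continuous g := hecont.comp (hγ.comp_continuous hprcont hprmem)
    refine no_crossing (e '' K) (hcpt.image hecont)
      (hconn.image e hecont.continuousOn).isPreconnected
      (e pt) (e pb) ⟨pt, hptK, rfl⟩ ⟨pb, hpbK, rfl⟩ g hgcont ?_ ?_ ?_ ?_ ?_
    · intro τ _ hmem
      obtain ⟨p, hpK, hpe⟩ := hmem
      have hpeq : p = γ (pr τ) := heinj hpe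
      exact hdisj (pr τ) (hprmem τ) (hpeq ▸ hpK)
    · intro τ _
      show (e (γ (pr τ))).im < (e pt).im
      rw [heim, heim, hpt1]
      exact (hex (pr τ) (hprmem τ)).2
    · intro τ _
      show (e pb).im < (e (γ (pr τ))).im
      rw [heim, heim, hpb1]
      exact (hex (pr τ) (hprmem τ)).1
    · rintro z ⟨p, hpK, rfl⟩
      show (e (γ (pr 0))).re < (e p).re
      rw [here, here, hpr0, hγ0]
      exact lt_of_lt_of_le hs0 (hxloK p hpK)
    · rintro z ⟨p, hpK, rfl⟩
      show (e p).re < (e (γ (pr 1))).re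
      rw [here, here, hpr1, hγ1]
      exact lt_of_le_of_lt (hxhiK p hpK) ht0
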